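/- Suppose A is a finitely presented R-module, ā a tuple from A whose pp-type in A is generated by the pp formula φ, and f : A → D is a 𝒟-preenvelope of A with D ∈ 𝒟. Then the pp-type of f(ā) in D is generated, modulo the theory of 𝒟, by φ. -/

import Mathlib

open TensorProduct DirectSum

universe u v

/-- A pp formula in `n` free variables. -/
structure PPFormula (R : Type u) [Ring R] (n : ℕ) where
  k : ℕ
  m : ℕ
  A : Fin n → Fin m → R
  B : Fin k → Fin m → R

/-- The solution set of a pp formula in a module. -/
def PPFormula.sol {R : Type u} [Ring R] {n : ℕ} (φ : PPFormula R n)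
    (M : Type v) [AddCommGroup M] [Module R M] : Set (Fin n → M) :=
  { a | ∃ b : Fin φ.k → M, ∀ j,
      (∑ i, φ.A i j • a i) + (∑ l, φ.B l j • b l) = 0 }

/-- A submodule `N ≤ M` is pure if `N ⊗ L → M ⊗ L` is injective for every module `L`. -/
def IsPureSubmodule (R : Type u) [CommRing R]
    (M : Type v) [AddCommGroup M] [Module R M] (N : Submodule R M) : Prop :=
  ∀ (L : Type v) [AddCommGroup L] [Module R L],
    Function.Injective (LinearMap.rTensor L N.subtype)

/-- A surjection is a pure epimorphism if its kernel is a pure submodule of the domain. -/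
def IsPureEpi (R : Type u) [CommRing R]
    {N : Type v} [AddCommGroup N] [Module R N] {M : Type v} [AddCommGroup M] [Module R M]
    (f : N →ₗ[R] M) : Prop :=
  Function.Surjective f ∧ IsPureSubmodule R N (LinearMap.ker f)

/-- A class of modules (closed under isomorphism) is definable if it is closed under
direct products, direct limits and pure submodules. -/
def IsDefinableClass (R : Type u) [CommRing R]
    (D : (M : Type v) → [AddCommGroup M] → [Module R M] → Prop) : Prop :=
  (∀ (M N : Type v) [AddCommGroup M] [Module R M] [AddCommGroup N] [Module R N],
      (M ≃ₗ[R] N) → D M → D N) ∧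
  (∀ (ι : Type v) (L : ι → Type v) [∀ i, AddCommGroup (L i)] [∀ i, Module R (L i)],
      (∀ i, D (L i)) → D (∀ i, L i)) ∧
  (∀ (ι : Type v) [Preorder ι] [IsDirected ι (· ≤ ·)] [Nonempty ι] [DecidableEq ι]
      (G : ι → Type v) [∀ i, AddCommGroup (G i)] [∀ i, Module R (G i)]
      (f : ∀ i j, i ≤ j → G i →ₗ[R] G j) [DirectedSystem G (fun i j h => f i j h)],
      (∀ i, D (G i)) → D (Module.DirectLimit G f)) ∧
  (∀ (M : Type v) [AddCommGroup M] [Module R M] (N : Submodule R M),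
      IsPureSubmodule R M N → D M → D N)

/-- `φ` generates the pp-type of the tuple `a` of `M` modulo the theory of `𝒟`. -/
def DGenerates (R : Type u) [CommRing R]
    (D : (M : Type v) → [AddCommGroup M] → [Module R M] → Prop)
    {n : ℕ} (φ : PPFormula R n)
    (M : Type v) [AddCommGroup M] [Module R M] (a : Fin n → M) : Prop :=
  a ∈ φ.sol M ∧ ∀ ψ : PPFormula R n, a ∈ ψ.sol M →
    ∀ (N : Type v) [AddCommGroup N] [Module R N], D N → φ.sol N ⊆ ψ.sol N

/-- `M ∈ 𝒟` is `𝒟`-atomic: every pp-type realised in `M` is `𝒟`-finitely generated. -/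
def IsDAtomic (R : Type u) [CommRing R]
    (D : (M : Type v) → [AddCommGroup M] → [Module R M] → Prop)
    (M : Type v) [AddCommGroup M] [Module R M] : Prop :=
  D M ∧ ∀ (n : ℕ) (a : Fin n → M), ∃ φ : PPFormula R n, DGenerates R D φ M a

/-- `M ∈ 𝒟` is strictly `𝒟`-atomic: it is `𝒟`-atomic and whenever `φ` `𝒟`-generates
the pp-type of `ā` in `M`, every `b̄ ∈ φ(N)` with `N ∈ 𝒟` is the image of `ā` under a
morphism `M → N`. -/
def IsStrictlyDAtomic (R : Type u) [CommRing R]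
    (D : (M : Type v) → [AddCommGroup M] → [Module R M] → Prop)
    (M : Type v) [AddCommGroup M] [Module R M] : Prop :=
  IsDAtomic R D M ∧
    ∀ (n : ℕ) (a : Fin n → M) (φ : PPFormula R n), DGenerates R D φ M a →
      ∀ (N : Type v) [AddCommGroup N] [Module R N], D N →
        ∀ b ∈ φ.sol N, ∃ f : M →ₗ[R] N, ∀ i, f (a i) = b i

/-- `f : A → D₀` is a `𝒟`-preenvelope of `A`. -/
def IsDPreenvelope (R : Type u) [CommRing R]
    (D : (M : Type v) → [AddCommGroup M] → [Module R M] → Prop)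
    (A : Type v) [AddCommGroup A] [Module R A]
    (D₀ : Type v) [AddCommGroup D₀] [Module R D₀] (f : A →ₗ[R] D₀) : Prop :=
  D D₀ ∧ ∀ (D' : Type v) [AddCommGroup D'] [Module R D'], D D' →
    ∀ g : A →ₗ[R] D', ∃ h : D₀ →ₗ[R] D', h.comp f = g

/-!
STATEMENT 16: If `A` is finitely presented, the pp-type of `ā` in `A` is generated by
`φ`, and `f : A → D₀` is a `𝒟`-preenvelope, then the pp-type of `f ā` in `D₀` is
generated by `φ` modulo the theory of `𝒟`.
-/
lemma sol_map {R : Type u} [CommRing R] {n : ℕ} (ψ : PPFormula R n)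
    {M : Type v} [AddCommGroup M] [Module R M] {N : Type v} [AddCommGroup N] [Module R N]
    (g : M →ₗ[R] N) {a : Fin n → M} (ha : a ∈ ψ.sol M) : (fun i => g (a i)) ∈ ψ.sol N := by
  obtain ⟨b, hb⟩ := ha
  refine ⟨fun l => g (b l), fun j => ?_⟩
  have := congrArg g (hb j)
  simpa [map_add, map_sum, map_smul] using this

lemma exists_map_of_sol (R : Type u) [CommRing R]
    (A : Type v) [AddCommGroup A] [Module R A] (hA : Module.FinitePresentation R A)
    (n : ℕ) (a : Fin n → A) (φ : PPFormula R n)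
    (hgen : ∀ ψ : PPFormula R n, a ∈ ψ.sol A →
      ∀ (N : Type v) [AddCommGroup N] [Module R N], φ.sol N ⊆ ψ.sol N)
    (N : Type v) [AddCommGroup N] [Module R N] (b : Fin n → N) (hb : b ∈ φ.sol N) :
    ∃ g : A →ₗ[R] N, ∀ i, g (a i) = b i := by
  haveI := hA
  obtain ⟨m, π, hπ⟩ := Module.Finite.exists_fin' R A
  have hker := Module.FinitePresentation.fg_ker π hπ
  obtain ⟨K, r, hr⟩ := Submodule.fg_iff_exists_fin_generating_family.mp hker
  choose α hα using fun i => hπ (a i)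
  set θ : PPFormula R n :=
    { k := m
      m := n + K
      A := fun i j => Fin.addCases (fun i' : Fin n => if i = i' then (1:R) else 0) (fun _ => 0) j
      B := fun y j => Fin.addCases (fun i' : Fin n => -(α i' y)) (fun l : Fin K => r l y) j }
    with hθ
  have haθ : a ∈ θ.sol A := by
    refine ⟨fun y => π (fun t => if y = t then (1:R) else 0), fun j => ?_⟩
    induction j using Fin.addCases with
    | left i' =>
      simp only [θ, Fin.addCases_left]
      have h1 : ∑ x : Fin n, (if x = i' then (1:R) else 0) • a x = a i' := by
        simp [ite_smul]
      rw [h1]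
      simp only [neg_smul]
      rw [Finset.sum_neg_distrib, ← sub_eq_add_neg, sub_eq_zero, ← hα i']
      exact LinearMap.pi_apply_eq_sum_univ π (α i')
    | right l =>
      simp only [θ, Fin.addCases_right, zero_smul, Finset.sum_const_zero, zero_add]
      have : r l ∈ LinearMap.ker π := by
        rw [← hr]; exact Submodule.subset_span (Set.mem_range_self l)
      rw [LinearMap.mem_ker] at this
      rw [← this, LinearMap.pi_apply_eq_sum_univ π (r l)]
  obtain ⟨y, hy⟩ := hgen θ haθ N hb
  set gt : (Fin m → R) →ₗ[R] N := Fintype.linearCombination R y with hgt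
  have hgtapp : ∀ v : Fin m → R, gt v = ∑ i, v i • y i := fun v => rfl
  have hle : LinearMap.ker π ≤ LinearMap.ker gt := by
    rw [← hr, Submodule.span_le]
    rintro _ ⟨l, rfl⟩
    have := hy (Fin.natAdd n l)
    simp only [θ, Fin.addCases_right, zero_smul, Finset.sum_const_zero, zero_add] at this
    simpa [LinearMap.mem_ker, hgtapp] using this
  set g₀ : A → N := fun x => gt (Function.surjInv hπ x) with hg₀
  have key : ∀ u : Fin m → R, g₀ (π u) = gt u := by
    intro u
    have h1 : π (Function.surjInv hπ (π u)) = π u := Function.surjInv_eq hπ (π u)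
    have h2 : Function.surjInv hπ (π u) - u ∈ LinearMap.ker π := by
      simp [LinearMap.mem_ker, map_sub, h1]
    have h3 := hle h2
    simp only [LinearMap.mem_ker, map_sub, sub_eq_zero] at h3
    exact h3
  refine ⟨{ toFun := g₀
            map_add' := by
              intro x z
              obtain ⟨u, rfl⟩ := hπ x; obtain ⟨v, rfl⟩ := hπ z
              show g₀ (π u + π v) = g₀ (π u) + g₀ (π v)
              rw [← map_add, key, key, key, map_add]
            map_smul' := by
              intro c x
              obtain ⟨u, rfl⟩ := hπ x
              show g₀ (c • π u) = c • g₀ (π u)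
              rw [← map_smul, key, key, map_smul] }, fun i => ?_⟩
  show g₀ (a i) = b i
  rw [← hα i, key, hgtapp]
  have := hy (Fin.castAdd K i)
  simp only [θ, Fin.addCases_left] at this
  have h1 : ∑ x : Fin n, (if x = i then (1:R) else 0) • b x = b i := by
    simp [ite_smul]
  rw [h1] at this
  simp only [neg_smul] at this
  rw [Finset.sum_neg_distrib, ← sub_eq_add_neg, sub_eq_zero] at this
  exact this.symm

theorem ppType_of_preenvelope_generated (R : Type u) [CommRing R]
    (D : (M : Type v) → [AddCommGroup M] → [Module R M] → Prop)
    (hD : IsDefinableClass R D)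
    (A : Type v) [AddCommGroup A] [Module R A] (hA : Module.FinitePresentation R A)
    (n : ℕ) (a : Fin n → A) (φ : PPFormula R n)
    (hφ : a ∈ φ.sol A)
    (hgen : ∀ ψ : PPFormula R n, a ∈ ψ.sol A →
      ∀ (N : Type v) [AddCommGroup N] [Module R N], φ.sol N ⊆ ψ.sol N)
    (D₀ : Type v) [AddCommGroup D₀] [Module R D₀] (f : A →ₗ[R] D₀)
    (hf : IsDPreenvelope R D A D₀ f) :
    DGenerates R D φ D₀ (fun i => f (a i)) := by
  constructor
  · exact sol_map φ f hφ
  · intro ψ hψ N _ _ hN b hb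
    obtain ⟨g, hg⟩ := exists_map_of_sol R A hA n a φ hgen N b hb
    obtain ⟨h, hh⟩ := hf.2 N hN g
    have hb' : (fun i => h (f (a i))) ∈ ψ.sol N := sol_map ψ h hψ
    have heq : (fun i => h (f (a i))) = b := by
      funext i
      have := congrArg (fun (t : A →ₗ[R] N) => t (a i)) hh
      simpa [hg i] using this
    rwa [heq] at hb'
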